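/- Every connected (P_5, K_4)-free graph G has a longest path transversal of size at most 3; that is, there is a set S of at most three vertices of G such that every longest path of G contains a vertex of S. -/

import Mathlib

open SimpleGraph

/-- `p` is a longest path of `G`: it is a path, and no path of `G` is longer. -/
def IsLongestPath {V : Type*} (G : SimpleGraph V) {u v : V} (p : G.Walk u v) : Prop :=
  p.IsPath ∧ ∀ (x y : V) (q : G.Walk x y), q.IsPath → q.length ≤ p.length

/-- `v` is a Gallai vertex of `G`: it lies on every longest path of `G`. -/
def IsGallaiVertex {V : Type*} (G : SimpleGraph V) (v : V) : Prop :=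
  ∀ (x y : V) (p : G.Walk x y), IsLongestPath G p → v ∈ p.support

/-- `G` is `H`-free: no induced subgraph of `G` is isomorphic to `H`. -/
def Free {W V : Type*} (H : SimpleGraph W) (G : SimpleGraph V) : Prop :=
  IsEmpty (H ↪g G)

/-- The claw `K_{1,3}`. -/
def claw : SimpleGraph (Fin 1 ⊕ Fin 3) := completeBipartiteGraph (Fin 1) (Fin 3)

/-- `P_3 + 2P_1`: a three-vertex path together with two isolated vertices. -/
def P3_2P1 : SimpleGraph (Fin 5) := fromEdgeSet {s(0,1), s(1,2)}
/-- `K_3 + 2P_1`: a triangle together with two isolated vertices. -/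
def K3_2P1 : SimpleGraph (Fin 5) := fromEdgeSet {s(0,1), s(1,2), s(0,2)}
/-- `2P_2 + P_1`: two disjoint edges together with one isolated vertex. -/
def twoP2_P1 : SimpleGraph (Fin 5) := fromEdgeSet {s(0,1), s(2,3)}
/-- `P_2 + 3P_1`: an edge together with three isolated vertices. -/
def P2_3P1 : SimpleGraph (Fin 5) := fromEdgeSet {s(0,1)}
/-- `2P_2`: the disjoint union of two edges. -/
def twoP2 : SimpleGraph (Fin 4) := fromEdgeSet {s(0,1), s(2,3)}
/-- The paw `N_{1,0,0}`: a triangle with a pendant vertex. -/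
def paw : SimpleGraph (Fin 4) := fromEdgeSet {s(0,1), s(1,2), s(0,2), s(2,3)}
/-- The diamond: `K_4` minus an edge. -/
def diamond : SimpleGraph (Fin 4) := fromEdgeSet {s(0,1), s(0,2), s(0,3), s(1,2), s(1,3)}
/-- The bull `N_{1,1,0}`: a triangle with two pendant vertices at distinct vertices. -/
def bull : SimpleGraph (Fin 5) := fromEdgeSet {s(0,1), s(1,2), s(0,2), s(0,3), s(1,4)}
/-- `N_{2,0,0}`: a triangle with a path of length two appended at one vertex. -/
def N200 : SimpleGraph (Fin 5) := fromEdgeSet {s(0,1), s(1,2), s(0,2), s(0,3), s(3,4)}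
/-- `N_{1,0,0} + P_1`: the paw together with an isolated vertex. -/
def paw_P1 : SimpleGraph (Fin 5) := fromEdgeSet {s(0,1), s(1,2), s(0,2), s(0,3)}
/-- `K_3 + P_2`: a triangle together with a disjoint edge. -/
def K3_P2 : SimpleGraph (Fin 5) := fromEdgeSet {s(0,1), s(1,2), s(0,2), s(3,4)}

/-- `x` is a cut vertex of `G`: deleting `x` leaves a disconnected graph. -/
def IsCutVertex {V : Type*} (G : SimpleGraph V) (x : V) : Prop :=
  ¬ (G.induce {y | y ≠ x}).Preconnected

/-- A linear forest: an acyclic graph in which every vertex has degree at most two,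
i.e. a graph every connected component of which is a path. -/
def IsLinearForest {V : Type*} (G : SimpleGraph V) : Prop :=
  G.IsAcyclic ∧ ∀ v : V, (G.neighborSet v).ncard ≤ 2

/-- A 5-ring: the vertices can be partitioned into five nonempty stable sets
`S 0, …, S 4` such that (indices mod 5) `S i` is complete to `S (i±1)` and
anticomplete to `S (i±2)`. -/
def Is5Ring {V : Type*} (G : SimpleGraph V) : Prop :=
  ∃ S : Fin 5 → Set V,
    (∀ i, (S i).Nonempty) ∧
    (∀ v : V, ∃! i, v ∈ S i) ∧
    (∀ i, ∀ u ∈ S i, ∀ v ∈ S i, ¬ G.Adj u v) ∧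
    (∀ i, ∀ u ∈ S i, ∀ v ∈ S (i + 1), G.Adj u v) ∧
    (∀ i, ∀ u ∈ S i, ∀ v ∈ S (i + 2), ¬ G.Adj u v)

section LPT_aux
variable {V : Type*} {G : SimpleGraph V}

/-- `v` touches `x`: equal or adjacent. -/
def tch (G : SimpleGraph V) (x v : V) : Prop := v = x ∨ G.Adj x v

lemma LPT_nsymm {a b : V} (h : ¬G.Adj a b) : ¬G.Adj b a := fun h' => h h'.symm

lemma LPT_not3 {u a b c : V} (h : ¬(tch G a u ∨ tch G b u ∨ tch G c u)) :
    (u ≠ a ∧ ¬G.Adj a u) ∧ (u ≠ b ∧ ¬G.Adj b u) ∧ (u ≠ c ∧ ¬G.Adj c u) := by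
  simp only [tch, not_or] at h; exact h

lemma LPT_not1 {u a : V} (h : ¬tch G a u) : u ≠ a ∧ ¬G.Adj a u := by
  simp only [tch, not_or] at h; exact h

lemma LPT_not3' {u a b c : V} (h1 : u ≠ a) (h1' : ¬G.Adj a u) (h2 : u ≠ b)
    (h2' : ¬G.Adj b u) (h3 : u ≠ c) (h3' : ¬G.Adj c u) :
    ¬(tch G a u ∨ tch G b u ∨ tch G c u) := by
  simp only [tch, not_or]; exact ⟨⟨h1, h1'⟩, ⟨h2, h2'⟩, h3, h3'⟩

lemma P5contra (h : _root_.Free (pathGraph 5) G)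
    (a b c d e : V)
    (hab : G.Adj a b) (hbc : G.Adj b c) (hcd : G.Adj c d) (hde : G.Adj d e)
    (hac : ¬G.Adj a c) (had : ¬G.Adj a d) (hae : ¬G.Adj a e)
    (hbd : ¬G.Adj b d) (hbe : ¬G.Adj b e) (hce : ¬G.Adj c e)
    (nac : a ≠ c) (nad : a ≠ d) (nae : a ≠ e)
    (nbd : b ≠ d) (nbe : b ≠ e) (nce : c ≠ e) : False := by
  have hca : ¬G.Adj c a := fun h' => hac h'.symm
  have hda : ¬G.Adj d a := fun h' => had h'.symm
  have hea : ¬G.Adj e a := fun h' => hae h'.symm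
  have hdb : ¬G.Adj d b := fun h' => hbd h'.symm
  have heb : ¬G.Adj e b := fun h' => hbe h'.symm
  have hec : ¬G.Adj e c := fun h' => hce h'.symm
  refine h.false ⟨⟨![a,b,c,d,e], ?_⟩, ?_⟩
  · intro i j hij
    fin_cases i <;> fin_cases j <;> simp_all <;>
      first
      | exact nac hij | exact nad hij | exact nae hij | exact nbd hij
      | exact nbe hij | exact nce hij
      | exact nac.symm hij | exact nad.symm hij | exact nae.symm hij
      | exact nbd.symm hij | exact nbe.symm hij | exact nce.symm hij
  · intro i j
    fin_cases i <;> fin_cases j <;>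
      simp only [Function.Embedding.coeFn_mk, Matrix.cons_val', Matrix.cons_val_zero,
        Matrix.cons_val_one, Matrix.head_cons, Matrix.cons_val_fin_one, Matrix.head_fin_const,
        Matrix.cons_val_succ] <;>
      first
      | exact iff_of_true (by assumption) (by rw [pathGraph_adj]; decide)
      | exact iff_of_true (Adj.symm (by assumption)) (by rw [pathGraph_adj]; decide)
      | exact iff_of_false (by assumption) (by rw [pathGraph_adj]; decide)
      | exact iff_of_false (G.irrefl (v := _)) (by rw [pathGraph_adj]; decide)

lemma K4contra (h : _root_.Free (⊤ : SimpleGraph (Fin 4)) G)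
    (a b c d : V)
    (hab : G.Adj a b) (hac : G.Adj a c) (had : G.Adj a d)
    (hbc : G.Adj b c) (hbd : G.Adj b d) (hcd : G.Adj c d) : False := by
  refine h.false ⟨⟨![a,b,c,d], ?_⟩, ?_⟩
  · intro i j hij
    fin_cases i <;> fin_cases j <;> simp_all
  · intro i j
    fin_cases i <;> fin_cases j <;>
      simp only [Function.Embedding.coeFn_mk, Matrix.cons_val', Matrix.cons_val_zero,
        Matrix.cons_val_one, Matrix.head_cons, Matrix.cons_val_fin_one, Matrix.head_fin_const,
        Matrix.cons_val_succ] <;>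
      first
      | exact iff_of_true (by assumption) (by decide)
      | exact iff_of_true (Adj.symm (by assumption)) (by decide)
      | exact iff_of_false (G.irrefl (v := _)) (by decide)

lemma LPT_cross {S : Set V} : ∀ {a b : V}, G.Walk a b → a ∈ S → b ∉ S →
    ∃ x y, G.Adj x y ∧ x ∈ S ∧ y ∉ S := by
  intro a b p
  induction p with
  | nil => intro ha hb; exact absurd ha hb
  | @cons u v w h q ih =>
    intro ha hb
    by_cases hv : v ∈ S
    · exact ih hv hb
    · exact ⟨u, v, h, ha, hv⟩

end LPT_aux

section LPT_main
variable {V : Type*} {G : SimpleGraph V}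

/-- Triangle source case: `p,q,r` is a triangle, `x` attached at `p` but not at `r`. -/
lemma LPT_TRI (h5 : _root_.Free (pathGraph 5) G) (p q r x u : V)
    (hpq : G.Adj p q) (hqr : G.Adj q r) (hpr : G.Adj p r)
    (hpx : G.Adj p x) (hrx : ¬G.Adj r x) (hxu : G.Adj x u)
    (hu : ¬(tch G p u ∨ tch G q u ∨ tch G r u))
    (hbeat : ∀ p' q' r', G.Adj p' q' → G.Adj q' r' → p' ≠ r' →
      (∀ w, (tch G p w ∨ tch G q w ∨ tch G r w) → (tch G p' w ∨ tch G q' w ∨ tch G r' w)) →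
      (tch G p' u ∨ tch G q' u ∨ tch G r' u) → False) : False := by
  obtain ⟨⟨hup, hup'⟩, ⟨huq, huq'⟩, hur, hur'⟩ := LPT_not3 hu
  have hxp : x ≠ p := fun h => G.irrefl (h ▸ hpx)
  have hxq : x ≠ q := fun h => huq' (h ▸ hxu)
  have hxr : x ≠ r := fun h => hur' (h ▸ hxu)
  by_cases hcov : ∀ w, tch G r w → (tch G x w ∨ tch G p w ∨ tch G q w)
  · refine hbeat x p q hpx.symm hpq hxq ?_ (Or.inl (Or.inr hxu))
    intro w hw
    rcases hw with h | h | h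
    · exact Or.inr (Or.inl h)
    · exact Or.inr (Or.inr h)
    · exact hcov w h
  · push_neg at hcov
    obtain ⟨z, hz1, hz2a, hz2b, hz2c⟩ := hcov
    obtain ⟨hzx, hzx'⟩ := LPT_not1 hz2a
    obtain ⟨hzp, hzp'⟩ := LPT_not1 hz2b
    obtain ⟨hzq, hzq'⟩ := LPT_not1 hz2c
    have hzr : G.Adj r z := by
      rcases hz1 with rfl | h
      · exact absurd hpr hzp'
      · exact h
    have hzu : G.Adj z u := by
      by_contra hzu
      exact P5contra h5 z r p x u hzr.symm hpr.symm hpx hxu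
        (LPT_nsymm hzp') (LPT_nsymm hzx') hzu hrx hur' hup'
        hzp hzx (fun h => hur' (h ▸ hzr)) hxr.symm hur.symm hup.symm
    refine hbeat z u x hzu hxu.symm hzx ?_ (Or.inr (Or.inl (Or.inl rfl)))
    intro w hw
    by_contra hwc
    obtain ⟨⟨hwz, hwz'⟩, ⟨hwu, hwu'⟩, hwx, hwx'⟩ := LPT_not3 hwc
    by_cases hpw : tch G p w
    · rcases hpw with rfl | h
      · exact hwx' hpx.symm
      · exact P5contra h5 w p x u z h.symm hpx hxu hzu.symm
          (LPT_nsymm hwx') (LPT_nsymm hwu') (LPT_nsymm hwz') hup' hzp' hzx'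
          hwx hwu hwz hup.symm hzp.symm hzx.symm
    · obtain ⟨hpw1, hpw2⟩ : w ≠ p ∧ ¬G.Adj p w := by
        simp only [tch, not_or] at hpw; exact hpw
      rcases hw with h | h | h
      · exact absurd h (by simp only [tch, not_or]; exact ⟨hpw1, hpw2⟩)
      · have hwq : G.Adj q w := by
          rcases h with rfl | h
          · exact absurd hpq hpw2
          · exact h
        by_cases hqx : G.Adj q x
        · exact P5contra h5 w q x u z hwq.symm hqx hxu hzu.symm
            (LPT_nsymm hwx') (LPT_nsymm hwu') (LPT_nsymm hwz') huq' hzq' hzx'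
            hwx hwu hwz huq.symm hzq.symm hzx.symm
        · exact P5contra h5 w q p x u hwq.symm hpq.symm hpx hxu
            (LPT_nsymm hpw2) (LPT_nsymm hwx') (LPT_nsymm hwu') hqx huq' hup'
            hpw1 hwx hwu hxq.symm huq.symm hup.symm
      · have hwr : G.Adj r w := by
          rcases h with rfl | h
          · exact absurd hzr.symm hwz'
          · exact h
        exact P5contra h5 w r p x u hwr.symm hpr.symm hpx hxu
          (LPT_nsymm hpw2) (LPT_nsymm hwx') (LPT_nsymm hwu') hrx hur' hup'
          hpw1 hwx hwu hxr.symm hur.symm hup.symm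


/-- P3 source, `x` attached only at endpoint `a`: immediate induced `P5`. -/
lemma LPT_P3A (h5 : _root_.Free (pathGraph 5) G) (a b c x u : V)
    (hab : G.Adj a b) (hbc : G.Adj b c) (hnac : ¬G.Adj a c) (hca : a ≠ c)
    (hax : G.Adj a x) (hbx : ¬G.Adj b x) (hcx : ¬G.Adj c x) (hxu : G.Adj x u)
    (hu : ¬(tch G a u ∨ tch G b u ∨ tch G c u)) : False := by
  obtain ⟨⟨hua, hua'⟩, ⟨hub, hub'⟩, huc, huc'⟩ := LPT_not3 hu
  have hxb : x ≠ b := fun h => hub' (h ▸ hxu)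
  have hxc : x ≠ c := fun h => huc' (h ▸ hxu)
  exact P5contra h5 u x a b c hxu.symm hax.symm hab hbc
    (LPT_nsymm hua') (LPT_nsymm hub') (LPT_nsymm huc') (LPT_nsymm hbx) (LPT_nsymm hcx) hnac
    hua hub huc hxb hxc hca

/-- P3 source, `x` attached only at the middle vertex `b`. -/
lemma LPT_P3B (h5 : _root_.Free (pathGraph 5) G) (a b c x u : V)
    (hab : G.Adj a b) (hbc : G.Adj b c) (hnac : ¬G.Adj a c) (hca : a ≠ c)
    (hax : ¬G.Adj a x) (hbx : G.Adj b x) (hcx : ¬G.Adj c x) (hxu : G.Adj x u)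
    (hu : ¬(tch G a u ∨ tch G b u ∨ tch G c u))
    (hbeat : ∀ p' q' r', G.Adj p' q' → G.Adj q' r' → p' ≠ r' →
      (∀ w, (tch G a w ∨ tch G b w ∨ tch G c w) → (tch G p' w ∨ tch G q' w ∨ tch G r' w)) →
      (tch G p' u ∨ tch G q' u ∨ tch G r' u) → False) : False := by
  obtain ⟨⟨hua, hua'⟩, ⟨hub, hub'⟩, huc, huc'⟩ := LPT_not3 hu
  have hxa : x ≠ a := fun h => hua' (h ▸ hxu)
  have hxc : x ≠ c := fun h => huc' (h ▸ hxu)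
  by_cases hcov : ∀ w, tch G a w → (tch G x w ∨ tch G b w ∨ tch G c w)
  · refine hbeat x b c hbx.symm hbc hxc ?_ (Or.inl (Or.inr hxu))
    intro w hw
    rcases hw with h | h | h
    · exact hcov w h
    · exact Or.inr (Or.inl h)
    · exact Or.inr (Or.inr h)
  · push_neg at hcov
    obtain ⟨z, hz1, hz2a, hz2b, hz2c⟩ := hcov
    obtain ⟨hzx, hzx'⟩ := LPT_not1 hz2a
    obtain ⟨hzb, hzb'⟩ := LPT_not1 hz2b
    obtain ⟨hzc, hzc'⟩ := LPT_not1 hz2c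
    have hza : G.Adj a z := by
      rcases hz1 with rfl | h
      · exact absurd hab.symm hzb'
      · exact h
    have hzu : G.Adj z u := by
      by_contra hzu
      exact P5contra h5 z a b x u hza.symm hab hbx hxu
        (LPT_nsymm hzb') (LPT_nsymm hzx') hzu hax hua' hub'
        hzb hzx (fun h => hua' (h ▸ hza)) hxa.symm hua.symm hub.symm
    refine hbeat z u x hzu hxu.symm hzx ?_ (Or.inr (Or.inl (Or.inl rfl)))
    intro w hw
    by_contra hwc
    obtain ⟨⟨hwz, hwz'⟩, ⟨hwu, hwu'⟩, hwx, hwx'⟩ := LPT_not3 hwc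
    by_cases hbw : tch G b w
    · rcases hbw with rfl | h
      · exact hwx' hbx.symm
      · exact P5contra h5 w b x u z h.symm hbx hxu hzu.symm
          (LPT_nsymm hwx') (LPT_nsymm hwu') (LPT_nsymm hwz') hub' hzb' hzx'
          hwx hwu hwz hub.symm hzb.symm hzx.symm
    · obtain ⟨hbw1, hbw2⟩ : w ≠ b ∧ ¬G.Adj b w := by
        simp only [tch, not_or] at hbw; exact hbw
      rcases hw with h | h | h
      · have hwa : G.Adj a w := by
          rcases h with rfl | h
          · exact absurd hab.symm hbw2
          · exact h
        exact P5contra h5 w a b x u hwa.symm hab hbx hxu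
          (LPT_nsymm hbw2) (LPT_nsymm hwx') (LPT_nsymm hwu') hax hua' hub'
          hbw1 hwx hwu hxa.symm hua.symm hub.symm
      · exact absurd h (by simp only [tch, not_or]; exact ⟨hbw1, hbw2⟩)
      · have hwc2 : G.Adj c w := by
          rcases h with rfl | h
          · exact absurd hbc hbw2
          · exact h
        exact P5contra h5 w c b x u hwc2.symm hbc.symm hbx hxu
          (LPT_nsymm hbw2) (LPT_nsymm hwx') (LPT_nsymm hwu') hcx huc' hub'
          hbw1 hwx hwu hxc.symm huc.symm hub.symm

/-- P3 source, `x` attached at `a` and `b` but not `c`. -/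
lemma LPT_P3AB (h5 : _root_.Free (pathGraph 5) G) (a b c x u : V)
    (hab : G.Adj a b) (hbc : G.Adj b c) (hnac : ¬G.Adj a c) (hca : a ≠ c)
    (hax : G.Adj a x) (hbx : G.Adj b x) (hcx : ¬G.Adj c x) (hxu : G.Adj x u)
    (hu : ¬(tch G a u ∨ tch G b u ∨ tch G c u))
    (hbeat : ∀ p' q' r', G.Adj p' q' → G.Adj q' r' → p' ≠ r' →
      (∀ w, (tch G a w ∨ tch G b w ∨ tch G c w) → (tch G p' w ∨ tch G q' w ∨ tch G r' w)) →
      (tch G p' u ∨ tch G q' u ∨ tch G r' u) → False) : False := by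
  obtain ⟨⟨hua, hua'⟩, ⟨hub, hub'⟩, huc, huc'⟩ := LPT_not3 hu
  have hxa : x ≠ a := hax.ne'
  have hxb : x ≠ b := hbx.ne'
  have hxc : x ≠ c := fun h => huc' (h ▸ hxu)
  by_cases hcov : ∀ w, tch G c w → (tch G x w ∨ tch G a w ∨ tch G b w)
  · refine hbeat x a b hax.symm hab hxb ?_ (Or.inl (Or.inr hxu))
    intro w hw
    rcases hw with h | h | h
    · exact Or.inr (Or.inl h)
    · exact Or.inr (Or.inr h)
    · exact hcov w h
  · push_neg at hcov
    obtain ⟨z, hz1, hz2a, hz2b, hz2c⟩ := hcov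
    obtain ⟨hzx, hzx'⟩ := LPT_not1 hz2a
    obtain ⟨hza, hza'⟩ := LPT_not1 hz2b
    obtain ⟨hzb, hzb'⟩ := LPT_not1 hz2c
    have hzc : G.Adj c z := by
      rcases hz1 with rfl | h
      · exact absurd hbc hzb'
      · exact h
    have hzu : G.Adj z u := by
      by_contra hzu
      exact P5contra h5 z c b x u hzc.symm hbc.symm hbx hxu
        (LPT_nsymm hzb') (LPT_nsymm hzx') hzu hcx huc' hub'
        hzb hzx (fun h => huc' (h ▸ hzc)) hxc.symm huc.symm hub.symm
    refine hbeat z u x hzu hxu.symm hzx ?_ (Or.inr (Or.inl (Or.inl rfl)))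
    intro w hw
    by_contra hwc
    obtain ⟨⟨hwz, hwz'⟩, ⟨hwu, hwu'⟩, hwx, hwx'⟩ := LPT_not3 hwc
    by_cases haw : tch G a w
    · rcases haw with rfl | h
      · exact hwx' hax.symm
      · exact P5contra h5 w a x u z h.symm hax hxu hzu.symm
          (LPT_nsymm hwx') (LPT_nsymm hwu') (LPT_nsymm hwz') hua' hza' hzx'
          hwx hwu hwz hua.symm hza.symm hzx.symm
    · by_cases hbw : tch G b w
      · rcases hbw with rfl | h
        · exact hwx' hbx.symm
        · exact P5contra h5 w b x u z h.symm hbx hxu hzu.symm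
            (LPT_nsymm hwx') (LPT_nsymm hwu') (LPT_nsymm hwz') hub' hzb' hzx'
            hwx hwu hwz hub.symm hzb.symm hzx.symm
      · obtain ⟨hbw1, hbw2⟩ : w ≠ b ∧ ¬G.Adj b w := by
          simp only [tch, not_or] at hbw; exact hbw
        rcases hw with h | h | h
        · exact absurd h haw
        · exact absurd h hbw
        · have hwc2 : G.Adj c w := by
            rcases h with rfl | h
            · exact absurd hzc.symm hwz'
            · exact h
          exact P5contra h5 w c b x u hwc2.symm hbc.symm hbx hxu
            (LPT_nsymm hbw2) (LPT_nsymm hwx') (LPT_nsymm hwu') hcx huc' hub'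
            hbw1 hwx hwu hxc.symm huc.symm hub.symm

/-- P3 source, `x` attached at the two endpoints `a`, `c` but not `b`. -/
lemma LPT_P3AC (h5 : _root_.Free (pathGraph 5) G) (a b c x u : V)
    (hab : G.Adj a b) (hbc : G.Adj b c) (hnac : ¬G.Adj a c) (hca : a ≠ c)
    (hax : G.Adj a x) (hbx : ¬G.Adj b x) (hcx : G.Adj c x) (hxu : G.Adj x u)
    (hu : ¬(tch G a u ∨ tch G b u ∨ tch G c u))
    (hbeat : ∀ p' q' r', G.Adj p' q' → G.Adj q' r' → p' ≠ r' →
      (∀ w, (tch G a w ∨ tch G b w ∨ tch G c w) → (tch G p' w ∨ tch G q' w ∨ tch G r' w)) →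
      (tch G p' u ∨ tch G q' u ∨ tch G r' u) → False) : False := by
  obtain ⟨⟨hua, hua'⟩, ⟨hub, hub'⟩, huc, huc'⟩ := LPT_not3 hu
  have hxa : x ≠ a := hax.ne'
  have hxc : x ≠ c := hcx.ne'
  have hxb : x ≠ b := fun h => hub' (h ▸ hxu)
  by_cases hcov : ∀ w, tch G b w → (tch G a w ∨ tch G x w ∨ tch G c w)
  · refine hbeat a x c hax hcx.symm hca ?_ (Or.inr (Or.inl (Or.inr hxu)))
    intro w hw
    rcases hw with h | h | h
    · exact Or.inl h
    · exact hcov w h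
    · exact Or.inr (Or.inr h)
  · push_neg at hcov
    obtain ⟨z, hz1, hz2a, hz2b, hz2c⟩ := hcov
    obtain ⟨hza, hza'⟩ := LPT_not1 hz2a
    obtain ⟨hzx, hzx'⟩ := LPT_not1 hz2b
    obtain ⟨hzc, hzc'⟩ := LPT_not1 hz2c
    have hzb : G.Adj b z := by
      rcases hz1 with rfl | h
      · exact absurd hab hza'
      · exact h
    have hzu : G.Adj z u := by
      by_contra hzu
      exact P5contra h5 z b a x u hzb.symm hab.symm hax hxu
        (LPT_nsymm hza') (LPT_nsymm hzx') hzu hbx hub' hua'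
        hza hzx (fun h => hub' (h ▸ hzb)) hxb.symm hub.symm hua.symm
    refine hbeat z u x hzu hxu.symm hzx ?_ (Or.inr (Or.inl (Or.inl rfl)))
    intro w hw
    by_contra hwc
    obtain ⟨⟨hwz, hwz'⟩, ⟨hwu, hwu'⟩, hwx, hwx'⟩ := LPT_not3 hwc
    by_cases haw : tch G a w
    · rcases haw with rfl | h
      · exact hwx' hax.symm
      · exact P5contra h5 w a x u z h.symm hax hxu hzu.symm
          (LPT_nsymm hwx') (LPT_nsymm hwu') (LPT_nsymm hwz') hua' hza' hzx'
          hwx hwu hwz hua.symm hza.symm hzx.symm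
    · by_cases hcw : tch G c w
      · rcases hcw with rfl | h
        · exact hwx' hcx.symm
        · exact P5contra h5 w c x u z h.symm hcx hxu hzu.symm
            (LPT_nsymm hwx') (LPT_nsymm hwu') (LPT_nsymm hwz') huc' hzc' hzx'
            hwx hwu hwz huc.symm hzc.symm hzx.symm
      · obtain ⟨haw1, haw2⟩ : w ≠ a ∧ ¬G.Adj a w := by
          simp only [tch, not_or] at haw; exact haw
        rcases hw with h | h | h
        · exact absurd h haw
        · have hwb : G.Adj b w := by
            rcases h with rfl | h
            · exact absurd hzb.symm hwz'
            · exact h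
          exact P5contra h5 w b a x u hwb.symm hab.symm hax hxu
            (LPT_nsymm haw2) (LPT_nsymm hwx') (LPT_nsymm hwu') hbx hub' hua'
            haw1 hwx hwu hxb.symm hub.symm hua.symm
        · exact absurd h hcw


/-- Subcase of the all-attached pattern, with `za` adjacent to `u`. -/
lemma LPT_SUB5 (h5 : _root_.Free (pathGraph 5) G) (a b c x u za zc : V)
    (hab : G.Adj a b) (hbc : G.Adj b c) (hnac : ¬G.Adj a c) (hca : a ≠ c)
    (hax : G.Adj a x) (hbx : G.Adj b x) (hcx : G.Adj c x) (hxu : G.Adj x u)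
    (hu : ¬(tch G a u ∨ tch G b u ∨ tch G c u))
    (haza : G.Adj a za) (hYx : za ≠ x) (hYx' : ¬G.Adj x za)
    (hYb : za ≠ b) (hYb' : ¬G.Adj b za) (hYc : za ≠ c) (hYc' : ¬G.Adj c za)
    (hczc : G.Adj c zc) (hZx : zc ≠ x) (hZx' : ¬G.Adj x zc)
    (hZa : zc ≠ a) (hZa' : ¬G.Adj a zc) (hZb : zc ≠ b) (hZb' : ¬G.Adj b zc)
    (hzz : G.Adj za zc) (hzau : G.Adj za u)
    (hbeat : ∀ p' q' r', G.Adj p' q' → G.Adj q' r' → p' ≠ r' →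
      (∀ w, (tch G a w ∨ tch G b w ∨ tch G c w) → (tch G p' w ∨ tch G q' w ∨ tch G r' w)) →
      (tch G p' u ∨ tch G q' u ∨ tch G r' u) → False) : False := by
  obtain ⟨⟨hua, hua'⟩, ⟨hub, hub'⟩, huc, huc'⟩ := LPT_not3 hu
  have hxa : x ≠ a := hax.ne'
  have hxb : x ≠ b := hbx.ne'
  have hxc : x ≠ c := hcx.ne'
  -- N[b] and N[c] are covered by {za, u, x}
  have covb : ∀ w, tch G b w → (tch G za w ∨ tch G u w ∨ tch G x w) := by
    intro w hw
    by_contra hwc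
    obtain ⟨⟨hwz, hwz'⟩, ⟨hwu, hwu'⟩, hwx, hwx'⟩ := LPT_not3 hwc
    rcases hw with rfl | h
    · exact hwx' hbx.symm
    · exact P5contra h5 w b x u za h.symm hbx hxu hzau.symm
        (LPT_nsymm hwx') (LPT_nsymm hwu') (LPT_nsymm hwz') hub' hYb' hYx'
        hwx hwu hwz hub.symm hYb.symm hYx.symm
  have covc : ∀ w, tch G c w → (tch G za w ∨ tch G u w ∨ tch G x w) := by
    intro w hw
    by_contra hwc
    obtain ⟨⟨hwz, hwz'⟩, ⟨hwu, hwu'⟩, hwx, hwx'⟩ := LPT_not3 hwc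
    rcases hw with rfl | h
    · exact hwx' hcx.symm
    · exact P5contra h5 w c x u za h.symm hcx hxu hzau.symm
        (LPT_nsymm hwx') (LPT_nsymm hwu') (LPT_nsymm hwz') huc' hYc' hYx'
        hwx hwu hwz huc.symm hYc.symm hYx.symm
  by_cases hcova : ∀ w, tch G a w → (tch G za w ∨ tch G u w ∨ tch G x w)
  · refine hbeat za u x hzau hxu.symm hYx ?_ (Or.inr (Or.inl (Or.inl rfl)))
    intro w hw
    rcases hw with h | h | h
    · exact hcova w h
    · exact covb w h
    · exact covc w h
  · push_neg at hcova
    obtain ⟨w, hw1, hw2a, hw2b, hw2c⟩ := hcova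
    obtain ⟨hwz, hwz'⟩ := LPT_not1 hw2a
    obtain ⟨hwu, hwu'⟩ := LPT_not1 hw2b
    obtain ⟨hwx, hwx'⟩ := LPT_not1 hw2c
    have hwa : G.Adj a w := by
      rcases hw1 with rfl | h
      · exact absurd hax.symm hwx'
      · exact h
    have hwcov : ¬(tch G za w ∨ tch G u w ∨ tch G x w) :=
      LPT_not3' hwz hwz' hwu hwu' hwx hwx'
    obtain ⟨hnb1, hnb2⟩ : w ≠ b ∧ ¬G.Adj b w :=
      LPT_not1 (fun h => hwcov (covb w h))
    obtain ⟨hnc1, hnc2⟩ : w ≠ c ∧ ¬G.Adj c w :=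
      LPT_not1 (fun h => hwcov (covc w h))
    have hwzc : G.Adj w zc := by
      by_contra h
      exact P5contra h5 w a b c zc hwa.symm hab hbc hczc
        (LPT_nsymm hnb2) (LPT_nsymm hnc2) h hnac hZa' hZb'
        hnb1 hnc1 (fun e => hZa' (e ▸ hwa)) hca hZa.symm hZb.symm
    by_cases hzcu : G.Adj zc u
    · -- exchange for {zc, u, x}
      have cova' : ∀ w', tch G a w' → (tch G zc w' ∨ tch G u w' ∨ tch G x w') := by
        intro w' hw'
        by_contra hw'c
        obtain ⟨⟨hvz, hvz'⟩, ⟨hvu, hvu'⟩, hvx, hvx'⟩ := LPT_not3 hw'c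
        rcases hw' with rfl | h
        · exact hvx' hax.symm
        · exact P5contra h5 w' a x u zc h.symm hax hxu hzcu.symm
            (LPT_nsymm hvx') (LPT_nsymm hvu') (LPT_nsymm hvz') hua' hZa' hZx'
            hvx hvu hvz hua.symm hZa.symm hZx.symm
      have covb' : ∀ w', tch G b w' → (tch G zc w' ∨ tch G u w' ∨ tch G x w') := by
        intro w' hw'
        by_contra hw'c
        obtain ⟨⟨hvz, hvz'⟩, ⟨hvu, hvu'⟩, hvx, hvx'⟩ := LPT_not3 hw'c
        rcases hw' with rfl | h
        · exact hvx' hbx.symm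
        · exact P5contra h5 w' b x u zc h.symm hbx hxu hzcu.symm
            (LPT_nsymm hvx') (LPT_nsymm hvu') (LPT_nsymm hvz') hub' hZb' hZx'
            hvx hvu hvz hub.symm hZb.symm hZx.symm
      by_cases hcovc' : ∀ w', tch G c w' → (tch G zc w' ∨ tch G u w' ∨ tch G x w')
      · refine hbeat zc u x hzcu hxu.symm hZx ?_ (Or.inr (Or.inl (Or.inl rfl)))
        intro w' hw'
        rcases hw' with h | h | h
        · exact cova' w' h
        · exact covb' w' h
        · exact hcovc' w' h
      · push_neg at hcovc'
        obtain ⟨w', hv1, hv2a, hv2b, hv2c⟩ := hcovc'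
        obtain ⟨hvz, hvz'⟩ := LPT_not1 hv2a
        obtain ⟨hvu, hvu'⟩ := LPT_not1 hv2b
        obtain ⟨hvx, hvx'⟩ := LPT_not1 hv2c
        have hvc : G.Adj c w' := by
          rcases hv1 with rfl | h
          · exact absurd hczc.symm hvz'
          · exact h
        have hvcov : ¬(tch G zc w' ∨ tch G u w' ∨ tch G x w') :=
          LPT_not3' hvz hvz' hvu hvu' hvx hvx'
        obtain ⟨hna1, hna2⟩ : w' ≠ a ∧ ¬G.Adj a w' :=
          LPT_not1 (fun h => hvcov (cova' w' h))
        obtain ⟨hnb1', hnb2'⟩ : w' ≠ b ∧ ¬G.Adj b w' :=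
          LPT_not1 (fun h => hvcov (covb' w' h))
        have hvza : G.Adj w' za := by
          by_contra h
          exact P5contra h5 w' c b a za hvc.symm hbc.symm hab.symm haza
            (LPT_nsymm hnb2') (LPT_nsymm hna2) h (LPT_nsymm hnac) hYc' hYb'
            hnb1' hna1 (fun e => hYc' (e ▸ hvc)) hca.symm hYc.symm hYb.symm
        have hww' : G.Adj w w' := by
          by_contra h
          exact P5contra h5 w a b c w' hwa.symm hab hbc hvc
            (LPT_nsymm hnb2) (LPT_nsymm hnc2) h hnac hna2 hnb2'
            hnb1 hnc1 (fun e => hna2 (e ▸ hwa)) hca hna1.symm hnb1'.symm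
        exact P5contra h5 w w' za u x hww' hvza hzau hxu.symm
          (LPT_nsymm hwz') (LPT_nsymm hwu') (LPT_nsymm hwx')
          (LPT_nsymm hvu') (LPT_nsymm hvx') (LPT_nsymm hYx')
          hwz hwu hwx hvu hvx hYx
    · -- ¬Adj zc u : direct P5
      exact P5contra h5 w zc za u x hwzc hzz.symm hzau hxu.symm
        (LPT_nsymm hwz') (LPT_nsymm hwu') (LPT_nsymm hwx')
        hzcu (LPT_nsymm hZx') (LPT_nsymm hYx')
        hwz hwu hwx (fun e => huc' (e ▸ hczc)) hZx hYx

/-- P3 source, `x` attached at all of `a`, `b`, `c`. -/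
lemma LPT_P3ALL (h5 : _root_.Free (pathGraph 5) G) (a b c x u : V)
    (hab : G.Adj a b) (hbc : G.Adj b c) (hnac : ¬G.Adj a c) (hca : a ≠ c)
    (hax : G.Adj a x) (hbx : G.Adj b x) (hcx : G.Adj c x) (hxu : G.Adj x u)
    (hu : ¬(tch G a u ∨ tch G b u ∨ tch G c u))
    (hbeat : ∀ p' q' r', G.Adj p' q' → G.Adj q' r' → p' ≠ r' →
      (∀ w, (tch G a w ∨ tch G b w ∨ tch G c w) → (tch G p' w ∨ tch G q' w ∨ tch G r' w)) →
      (tch G p' u ∨ tch G q' u ∨ tch G r' u) → False) : False := by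
  obtain ⟨⟨hua, hua'⟩, ⟨hub, hub'⟩, huc, huc'⟩ := LPT_not3 hu
  have hxa : x ≠ a := hax.ne'
  have hxb : x ≠ b := hbx.ne'
  have hxc : x ≠ c := hcx.ne'
  -- get zc
  by_cases hcovc : ∀ w, tch G c w → (tch G x w ∨ tch G a w ∨ tch G b w)
  · refine hbeat x a b hax.symm hab hxb ?_ (Or.inl (Or.inr hxu))
    intro w hw
    rcases hw with h | h | h
    · exact Or.inr (Or.inl h)
    · exact Or.inr (Or.inr h)
    · exact hcovc w h
  push_neg at hcovc
  obtain ⟨zc, hZ1, hZ2a, hZ2b, hZ2c⟩ := hcovc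
  obtain ⟨hZx, hZx'⟩ := LPT_not1 hZ2a
  obtain ⟨hZa, hZa'⟩ := LPT_not1 hZ2b
  obtain ⟨hZb, hZb'⟩ := LPT_not1 hZ2c
  have hczc : G.Adj c zc := by
    rcases hZ1 with rfl | h
    · exact absurd hbc hZb'
    · exact h
  -- get za
  by_cases hcova : ∀ w, tch G a w → (tch G x w ∨ tch G c w ∨ tch G b w)
  · refine hbeat x c b hcx.symm hbc.symm hxb ?_ (Or.inl (Or.inr hxu))
    intro w hw
    rcases hw with h | h | h
    · exact hcova w h
    · exact Or.inr (Or.inr h)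
    · exact Or.inr (Or.inl h)
  push_neg at hcova
  obtain ⟨za, hY1, hY2a, hY2b, hY2c⟩ := hcova
  obtain ⟨hYx, hYx'⟩ := LPT_not1 hY2a
  obtain ⟨hYc, hYc'⟩ := LPT_not1 hY2b
  obtain ⟨hYb, hYb'⟩ := LPT_not1 hY2c
  have haza : G.Adj a za := by
    rcases hY1 with rfl | h
    · exact absurd hab.symm hYb'
    · exact h
  have hzz : G.Adj za zc := by
    by_contra h
    exact P5contra h5 za a b c zc haza.symm hab hbc hczc
      (LPT_nsymm hYb') (LPT_nsymm hYc') h hnac hZa' hZb'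
      hYb hYc (fun e => hZa' (e ▸ haza)) hca hZa.symm hZb.symm
  have hor : G.Adj za u ∨ G.Adj zc u := by
    by_contra h
    push_neg at h
    obtain ⟨h1, h2⟩ := h
    exact P5contra h5 za zc c x u hzz hczc.symm hcx hxu
      (LPT_nsymm hYc') (LPT_nsymm hYx') h1 (LPT_nsymm hZx') h2 huc'
      hYc hYx (fun e => hua' (e ▸ haza)) hZx (fun e => huc' (e ▸ hczc)) huc.symm
  rcases hor with hzau | hzcu
  · exact LPT_SUB5 h5 a b c x u za zc hab hbc hnac hca hax hbx hcx hxu hu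
      haza hYx hYx' hYb hYb' hYc hYc' hczc hZx hZx' hZa hZa' hZb hZb' hzz hzau hbeat
  · exact LPT_SUB5 h5 c b a x u zc za hbc.symm hab.symm (LPT_nsymm hnac) hca.symm
      hcx hbx hax hxu (fun h => hu (by tauto))
      hczc hZx hZx' hZb hZb' hZa hZa' haza hYx hYx' hYc hYc' hYb hYb' hzz.symm hzcu
      (fun p' q' r' h1 h2 h3 hsub hu' =>
        hbeat p' q' r' h1 h2 h3 (fun w hw => hsub w (by tauto)) hu')


lemma LPT_orp {A B C : Prop} (h : C ∨ B ∨ A) : A ∨ B ∨ C := by tauto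
lemma LPT_orp2 {A B C : Prop} (h : A ∨ C ∨ B) : A ∨ B ∨ C := by tauto
lemma LPT_orp3 {A B C : Prop} (h : B ∨ A ∨ C) : A ∨ B ∨ C := by tauto

lemma LPT_dom3 {V : Type} [Fintype V] (G : SimpleGraph V) (hG : G.Connected)
    (h1 : _root_.Free (pathGraph 5) G) (h2 : _root_.Free (⊤ : SimpleGraph (Fin 4)) G) :
    ∃ D : Finset V, D.card ≤ 3 ∧ ∀ v : V, ∃ d ∈ D, v = d ∨ G.Adj d v := by
  classical
  by_cases hsmall : Fintype.card V ≤ 2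
  · refine ⟨Finset.univ, ?_, fun v => ⟨v, Finset.mem_univ v, Or.inl rfl⟩⟩
    simpa [Finset.card_univ] using hsmall.trans (by norm_num)
  · push_neg at hsmall
    -- find an edge at v0
    obtain ⟨v0, w0, hvw⟩ := Fintype.exists_pair_of_one_lt_card (α := V) (by omega)
    obtain ⟨pw⟩ := hG.preconnected v0 w0
    obtain ⟨x1, y1, hx1y1, hx1, hy1⟩ :=
      LPT_cross (S := {z | z = v0}) pw rfl hvw.symm
    have hedge : G.Adj v0 y1 := hx1 ▸ hx1y1
    -- find a third vertex
    obtain ⟨z0, hz1, hz2⟩ : ∃ z, z ≠ v0 ∧ z ≠ y1 := by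
      by_contra h
      push_neg at h
      have hsub : (Finset.univ : Finset V) ⊆ {v0, y1} := by
        intro z _
        by_cases hz : z = v0
        · simp [hz]
        · simp [h z hz]
      have h2' : ({v0, y1} : Finset V).card ≤ 2 :=
        (Finset.card_insert_le _ _).trans (by simp)
      have hle : Fintype.card V ≤ 2 :=
        le_trans (le_trans Finset.card_univ.ge (Finset.card_le_card hsub)) h2'
      omega
    obtain ⟨p2⟩ := hG.preconnected v0 z0
    obtain ⟨x2, y2, hx2y2, hx2, hy2⟩ :=
      LPT_cross (S := {z | z = v0 ∨ z = y1}) p2 (Or.inl rfl)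
        (fun h => h.elim hz1 hz2)
    have hchain : ∃ p q r, G.Adj p q ∧ G.Adj q r ∧ p ≠ r := by
      rcases hx2 with h | h
      · exact ⟨y2, v0, y1, (h ▸ hx2y2).symm, hedge,
          fun e => hy2 (Or.inr e)⟩
      · exact ⟨y2, y1, v0, (h ▸ hx2y2).symm, hedge.symm,
          fun e => hy2 (Or.inl e)⟩
    obtain ⟨p0, q0, r0, hc1, hc2, hc3⟩ := hchain
    let f : V × V × V → ℕ := fun t =>
      (Finset.univ.filter (fun w => tch G t.1 w ∨ tch G t.2.1 w ∨ tch G t.2.2 w)).card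
    let F : Finset (V × V × V) :=
      Finset.univ.filter (fun t => G.Adj t.1 t.2.1 ∧ G.Adj t.2.1 t.2.2 ∧ t.1 ≠ t.2.2)
    have hFne : F.Nonempty := ⟨(p0, q0, r0), by simp [F, hc1, hc2, hc3]⟩
    obtain ⟨t, htF, hmax⟩ := F.exists_max_image f hFne
    obtain ⟨a, b, c⟩ := t
    have htF' : G.Adj a b ∧ G.Adj b c ∧ a ≠ c := by simpa [F] using htF
    obtain ⟨hab, hbc, hac0⟩ := htF'
    refine ⟨{a, b, c}, ?_, ?_⟩
    · calc ({a, b, c} : Finset V).card ≤ ({b, c} : Finset V).card + 1 :=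
            Finset.card_insert_le _ _
        _ ≤ (({c} : Finset V).card + 1) + 1 :=
            Nat.add_le_add_right (Finset.card_insert_le _ _) 1
        _ ≤ 3 := by simp
    · intro v
      by_contra hv
      push_neg at hv
      have hvc : ¬(tch G a v ∨ tch G b v ∨ tch G c v) := by
        rintro ((h | h) | (h | h) | (h | h))
        · exact (hv a (by simp)).1 h
        · exact (hv a (by simp)).2 h
        · exact (hv b (by simp)).1 h
        · exact (hv b (by simp)).2 h
        · exact (hv c (by simp)).1 h
        · exact (hv c (by simp)).2 h
      obtain ⟨p3⟩ := hG.preconnected a v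
      obtain ⟨x, u, hxu, hxS, huS⟩ :=
        LPT_cross (S := {w | tch G a w ∨ tch G b w ∨ tch G c w}) p3
          (Or.inl (Or.inl rfl)) hvc
      have hbeat : ∀ p' q' r', G.Adj p' q' → G.Adj q' r' → p' ≠ r' →
          (∀ w, (tch G a w ∨ tch G b w ∨ tch G c w) →
            (tch G p' w ∨ tch G q' w ∨ tch G r' w)) →
          (tch G p' u ∨ tch G q' u ∨ tch G r' u) → False := by
        intro p' q' r' h1' h2' h3' hsub hu'
        have hmem' : (p', q', r') ∈ F := by simp [F, h1', h2', h3']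
        have hle := hmax _ hmem'
        have hlt : f (a, b, c) < f (p', q', r') := by
          apply Finset.card_lt_card
          refine (Finset.ssubset_iff_of_subset ?_).mpr ⟨u, ?_, ?_⟩
          · intro w hw
            simp only [Finset.mem_filter, Finset.mem_univ, true_and] at hw ⊢
            exact hsub w hw
          · simp only [Finset.mem_filter, Finset.mem_univ, true_and]
            exact hu'
          · simp only [Finset.mem_filter, Finset.mem_univ, true_and]
            exact huS
        simp only [f] at hlt hle
        omega
      have hax3 : G.Adj a x ∨ G.Adj b x ∨ G.Adj c x := by
        rcases hxS with (h | h) | (h | h) | (h | h)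
        · exact absurd (Or.inl (Or.inr (h ▸ hxu))) huS
        · exact Or.inl h
        · exact absurd (Or.inr (Or.inl (Or.inr (h ▸ hxu)))) huS
        · exact Or.inr (Or.inl h)
        · exact absurd (Or.inr (Or.inr (Or.inr (h ▸ hxu)))) huS
        · exact Or.inr (Or.inr h)
      exfalso
      by_cases hAC : G.Adj a c
      · by_cases t1 : G.Adj a x
        · by_cases t3 : G.Adj c x
          · by_cases t2 : G.Adj b x
            · exact K4contra h2 x a b c t1.symm t2.symm t3.symm hab hAC hbc
            · exact LPT_TRI h1 a c b x u hAC hbc.symm hab t1 t2 hxu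
                (fun h => huS (LPT_orp2 h))
                (fun p' q' r' e1 e2 e3 hsub hu' =>
                  hbeat p' q' r' e1 e2 e3 (fun w hw => hsub w (LPT_orp2 hw)) hu')
          · exact LPT_TRI h1 a b c x u hab hbc hAC t1 t3 hxu huS hbeat
        · by_cases t3 : G.Adj c x
          · exact LPT_TRI h1 c b a x u hbc.symm hab.symm hAC.symm t3 t1 hxu
              (fun h => huS (LPT_orp h))
              (fun p' q' r' e1 e2 e3 hsub hu' =>
                hbeat p' q' r' e1 e2 e3 (fun w hw => hsub w (LPT_orp hw)) hu')
          · have t2 : G.Adj b x := by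
              rcases hax3 with h | h | h
              exacts [absurd h t1, h, absurd h t3]
            exact LPT_TRI h1 b a c x u hab.symm hAC hbc t2 t3 hxu
              (fun h => huS (LPT_orp3 h))
              (fun p' q' r' e1 e2 e3 hsub hu' =>
                hbeat p' q' r' e1 e2 e3 (fun w hw => hsub w (LPT_orp3 hw)) hu')
      · by_cases t1 : G.Adj a x <;> by_cases t2 : G.Adj b x <;> by_cases t3 : G.Adj c x
        · exact LPT_P3ALL h1 a b c x u hab hbc hAC hac0 t1 t2 t3 hxu huS hbeat
        · exact LPT_P3AB h1 a b c x u hab hbc hAC hac0 t1 t2 t3 hxu huS hbeat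
        · exact LPT_P3AC h1 a b c x u hab hbc hAC hac0 t1 t2 t3 hxu huS hbeat
        · exact LPT_P3A h1 a b c x u hab hbc hAC hac0 t1 t2 t3 hxu huS
        · exact LPT_P3AB h1 c b a x u hbc.symm hab.symm (LPT_nsymm hAC) hac0.symm
            t3 t2 t1 hxu (fun h => huS (LPT_orp h))
            (fun p' q' r' e1 e2 e3 hsub hu' =>
              hbeat p' q' r' e1 e2 e3 (fun w hw => hsub w (LPT_orp hw)) hu')
        · exact LPT_P3B h1 a b c x u hab hbc hAC hac0 t1 t2 t3 hxu huS hbeat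
        · exact LPT_P3A h1 c b a x u hbc.symm hab.symm (LPT_nsymm hAC) hac0.symm
            t3 t2 t1 hxu (fun h => huS (LPT_orp h))
        · rcases hax3 with h | h | h
          exacts [absurd h t1, absurd h t2, absurd h t3]

end LPT_main

/-- Every connected `(P_5, K_4)`-free graph has a longest path transversal of size
at most three. -/
theorem stmt_19 {V : Type} [Fintype V] (G : SimpleGraph V) (hG : G.Connected)
    (h1 : _root_.Free (pathGraph 5) G) (h2 : _root_.Free (⊤ : SimpleGraph (Fin 4)) G) :
    ∃ S : Finset V, S.card ≤ 3 ∧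
      ∀ (u v : V) (p : G.Walk u v), IsLongestPath G p → ∃ s ∈ S, s ∈ p.support := by
  classical
  obtain ⟨D, hcard, hdom⟩ := LPT_dom3 G hG h1 h2
  refine ⟨D, hcard, ?_⟩
  intro u v p hp
  by_contra h
  push_neg at h
  obtain ⟨d, hdD, hd⟩ := hdom u
  rcases hd with rfl | hadj
  · exact h _ hdD p.start_mem_support
  · have hd_not : d ∉ p.support := h d hdD
    have hq : (SimpleGraph.Walk.cons hadj p).IsPath :=
      (SimpleGraph.Walk.cons_isPath_iff _ _).mpr ⟨hp.1, hd_not⟩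
    have hle := hp.2 d v (SimpleGraph.Walk.cons hadj p) hq
    simp only [SimpleGraph.Walk.length_cons] at hle
    omega
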